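/- Let r_s > 0, a > r_s/4 be real numbers, set b := r_s²/(16a), and let r > 0 and θ be real numbers such that (r − a)² + 2ar(1 − cos θ) ≠ 0 and (r − b)² + 2br(1 − cos θ) ≠ 0. Then the function θ ↦ μ(r,θ) is differentiable at θ with derivative r · μ(r,θ)³ · (a − b)(ab − r²) sin θ / ((r − b)² + 2br(1 − cos θ))², i.e. (1/μ³)(1/r)·∂μ/∂θ = (a − b)(ab − r²) sin θ/(r² + b² − 2br cos θ)². -/

import Mathlib

/-- Copson's auxiliary function μ(r,θ) with particle position `a` and `b = r_s²/(16a)`. -/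
noncomputable def muLinet (r_s a r θ : ℝ) : ℝ :=
  Real.sqrt (((r - r_s ^ 2 / (16 * a)) ^ 2 +
      2 * (r_s ^ 2 / (16 * a)) * r * (1 - Real.cos θ)) /
    ((r - a) ^ 2 + 2 * a * r * (1 - Real.cos θ)))

/-- Angular derivative of Copson's auxiliary function:
(1/μ³)(1/r)·∂μ/∂θ = (a − b)(ab − r²) sin θ/((r − b)² + 2br(1 − cos θ))²,
with b = r_s²/(16a). -/
theorem muLinet_hasDerivAt_angular (r_s a r θ : ℝ)
    (hrs : 0 < r_s) (ha : r_s / 4 < a) (hr : 0 < r)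
    (hden : (r - a) ^ 2 + 2 * a * r * (1 - Real.cos θ) ≠ 0)
    (hnum : (r - r_s ^ 2 / (16 * a)) ^ 2 +
      2 * (r_s ^ 2 / (16 * a)) * r * (1 - Real.cos θ) ≠ 0) :
    HasDerivAt (fun θ' => muLinet r_s a r θ')
      (r * (muLinet r_s a r θ) ^ 3 * (a - r_s ^ 2 / (16 * a)) *
        (a * (r_s ^ 2 / (16 * a)) - r ^ 2) * Real.sin θ /
        ((r - r_s ^ 2 / (16 * a)) ^ 2 +
          2 * (r_s ^ 2 / (16 * a)) * r * (1 - Real.cos θ)) ^ 2) θ := by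
  have ha0 : 0 < a := lt_trans (by positivity) ha
  set b : ℝ := r_s ^ 2 / (16 * a) with hbdef
  have hb : 0 < b := by positivity
  have hc1 : 0 ≤ 1 - Real.cos θ := by linarith [Real.cos_le_one θ]
  set N : ℝ := (r - b) ^ 2 + 2 * b * r * (1 - Real.cos θ) with hNdef
  set D : ℝ := (r - a) ^ 2 + 2 * a * r * (1 - Real.cos θ) with hDdef
  have hDnn : 0 ≤ D := add_nonneg (sq_nonneg _) (by positivity)
  have hNnn : 0 ≤ N := add_nonneg (sq_nonneg _) (by positivity)
  have hD : 0 < D := hDnn.lt_of_ne (Ne.symm hden)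
  have hN : 0 < N := hNnn.lt_of_ne (Ne.symm hnum)
  have hD' : HasDerivAt (fun θ' => (r - a) ^ 2 + 2 * a * r * (1 - Real.cos θ'))
      (2 * a * r * Real.sin θ) θ := by
    have h := ((hasDerivAt_const θ (1:ℝ)).sub (Real.hasDerivAt_cos θ)).const_mul (2 * a * r)
    have h2 := h.const_add ((r - a) ^ 2)
    convert h2 using 1
    · rfl
    · rfl
    · rfl
    ring
  have hN' : HasDerivAt (fun θ' => (r - b) ^ 2 + 2 * b * r * (1 - Real.cos θ'))
      (2 * b * r * Real.sin θ) θ := by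
    have h := ((hasDerivAt_const θ (1:ℝ)).sub (Real.hasDerivAt_cos θ)).const_mul (2 * b * r)
    have h2 := h.const_add ((r - b) ^ 2)
    convert h2 using 1
    · rfl
    · rfl
    · rfl
    ring
  have hf := (hN'.div hD' hD.ne')
  have hfθ : N / D ≠ 0 := by positivity
  have hμ := hf.sqrt hfθ
  have hmu : muLinet r_s a r θ = Real.sqrt (N / D) := rfl
  have hmufun : (fun θ' => muLinet r_s a r θ') =
      fun θ' => Real.sqrt (((r - b) ^ 2 + 2 * b * r * (1 - Real.cos θ')) /
        ((r - a) ^ 2 + 2 * a * r * (1 - Real.cos θ'))) := rfl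
  rw [hmufun, hmu]
  convert hμ using 1
  · rfl
  set s : ℝ := Real.sqrt (N / D) with hsdef
  have hs : 0 < s := Real.sqrt_pos.2 (by positivity)
  have hs2 : s ^ 2 = N / D := Real.sq_sqrt (by positivity)
  have hsD : s ^ 2 * D = N := by rw [hs2]; field_simp
  have key : 2 * b * r * Real.sin θ * D - N * (2 * a * r * Real.sin θ) =
      2 * r * Real.sin θ * ((a - b) * (a * b - r ^ 2)) := by
    rw [hNdef, hDdef]; ring
  have hX : r * s ^ 3 * ((a - b) * (a * b - r ^ 2)) * Real.sin θ / N ^ 2 =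
      2 * r * Real.sin θ * ((a - b) * (a * b - r ^ 2)) / D ^ 2 / (2 * s) := by
    generalize (a - b) * (a * b - r ^ 2) = X
    have hNe := hN.ne'
    have hDe := hD.ne'
    have hse := hs.ne'
    clear_value N D s
    field_simp
    ring_nf
    linear_combination (X * Real.sin θ * (s ^ 2 * D + N)) * hsD
  calc r * s ^ 3 * (a - b) * (a * b - r ^ 2) * Real.sin θ / N ^ 2
      = r * s ^ 3 * ((a - b) * (a * b - r ^ 2)) * Real.sin θ / N ^ 2 := by ring
    _ = 2 * r * Real.sin θ * ((a - b) * (a * b - r ^ 2)) / D ^ 2 / (2 * s) := hX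
    _ = (2 * b * r * Real.sin θ * D - N * (2 * a * r * Real.sin θ)) / D ^ 2 / (2 * s) := by
        rw [key]
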